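/- Let f : ℤ → ℤ be defined on nonadjacent forms by f(Σ_{i=0}^{h−1} ε_{kᵢ} 2^{kᵢ}) = Σ_{i=0}^{h−1} ε_{kᵢ} 3^{kᵢ − i}, where k₀ < k₁ < ⋯ < k_{h−1} with k_i − k_{i−1} ≥ 2 and ε_{kᵢ} = ±1. Then f is a bijection from ℤ to ℤ and ℓ₂(n) = ℓ₃(f(n)) for all n ∈ ℤ; i.e., f preserves word length with respect to A₂ and A₃ respectively. -/

import Mathlib

def Ag (g : ℤ) : Set ℤ := {0} ∪ {x | ∃ i : ℕ, x = g ^ i ∨ x = -g ^ i}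

noncomputable def lg (g : ℤ) (n : ℤ) : ℕ :=
  sInf {h | ∃ l : List ℤ, (∀ a ∈ l, a ∈ Ag g) ∧ l.sum = n ∧ l.length = h}

def r3 (n : ℤ) : ℤ := if n % 3 = 2 then -1 else n % 3
def r4 (n : ℤ) : ℤ := if n % 4 = 3 then -1 else n % 4
def w3 (n : ℤ) : ℕ :=
  if n = 0 then 0 else (r3 n).natAbs + w3 ((n - r3 n) / 3)
termination_by n.natAbs
decreasing_by unfold r3; split <;> omega
def w2 (n : ℤ) : ℕ :=
  if n = 0 then 0
  else if n % 2 = 0 then w2 (n / 2)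
  else 1 + w2 ((n - r4 n) / 2)
termination_by n.natAbs
decreasing_by
  · omega
  · unfold r4; split <;> omega
lemma w3_zero : w3 0 = 0 := by rw [w3]; simp
lemma w2_zero : w2 0 = 0 := by rw [w2]; simp
lemma w3_step (n r : ℤ) (hr : r.natAbs ≤ 1) (hd : (3:ℤ) ∣ n - r) (h0 : n = 0 → r = 0) :
    w3 n = r.natAbs + w3 ((n - r) / 3) := by
  by_cases hn : n = 0
  · subst hn; rw [h0 rfl]; simp [w3_zero]
  · have hr3 : r3 n = r := by unfold r3; split <;> omega
    rw [w3]; simp [hn, hr3]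
lemma w2_even (n : ℤ) (hd : (2:ℤ) ∣ n) : w2 n = w2 (n / 2) := by
  by_cases hn : n = 0
  · subst hn; simp [w2_zero]
  · rw [w2]; simp [hn]; intro h; omega
lemma w2_odd (n r : ℤ) (hr : r = 1 ∨ r = -1) (hd : (4:ℤ) ∣ n - r) :
    w2 n = 1 + w2 ((n - r) / 2) := by
  have hn : n ≠ 0 := by rintro rfl; omega
  have ho : ¬ (n % 2 = 0) := by omega
  have hr4 : r4 n = r := by unfold r4; split <;> omega
  rw [w2]; simp [hn, ho, hr4]
lemma w3_mul3 (x : ℤ) : w3 (3 * x) = w3 x := by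
  rw [w3_step (3*x) 0 (by simp) (by simp) (by simp)]
  simp [Int.mul_ediv_cancel_left x (by norm_num : (3:ℤ) ≠ 0)]
lemma w2_mul2 (x : ℤ) : w2 (2 * x) = w2 x := by
  rw [w2_even (2*x) ⟨x, rfl⟩, Int.mul_ediv_cancel_left x (by norm_num : (2:ℤ) ≠ 0)]
lemma w3_pow_mul (s : ℕ) (x : ℤ) : w3 (3 ^ s * x) = w3 x := by
  induction s with
  | zero => simp
  | succ s ih => rw [pow_succ, mul_comm (3^s) 3, mul_assoc, w3_mul3, ih]
lemma w2_pow_mul (s : ℕ) (x : ℤ) : w2 (2 ^ s * x) = w2 x := by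
  induction s with
  | zero => simp
  | succ s ih => rw [pow_succ, mul_comm (2^s) 2, mul_assoc, w2_mul2, ih]

lemma L3 : ∀ (m : ℕ) (t : Fin m → ℕ) (ε : Fin m → ℤ),
    StrictMono t → (∀ i, ε i = 1 ∨ ε i = -1) →
    w3 (∑ i, ε i * 3 ^ t i) = m := by
  intro m
  induction m with
  | zero => intro t ε _ _; simp [w3_zero]
  | succ m ih =>
    intro t ε hmono hε
    have hk0 : ∀ i : Fin (m+1), t 0 ≤ t i := fun i => hmono.monotone (Fin.zero_le i)
    have hfac : (∑ i, ε i * 3 ^ t i) = 3 ^ (t 0) * ∑ i, ε i * 3 ^ (t i - t 0) := by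
      rw [Finset.mul_sum]
      refine Finset.sum_congr rfl fun i _ => ?_
      have hh := hk0 i
      generalize hE : t i - t 0 = e at *
      have h : t i = t 0 + e := by omega
      rw [h, pow_add]; ring
    rw [hfac, w3_pow_mul]
    set n'' : ℤ := ∑ i : Fin m, ε i.succ * 3 ^ (t i.succ - t 0 - 1) with hn''
    have hsucc_ge : ∀ i : Fin m, t 0 + 1 ≤ t i.succ := by
      intro i
      have : (0 : Fin (m+1)) < i.succ := by simp [Fin.lt_def]
      exact hmono this
    have hsum : (∑ i : Fin (m+1), ε i * 3 ^ (t i - t 0)) = ε 0 + 3 * n'' := by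
      rw [Fin.sum_univ_succ]
      simp only [Nat.sub_self, pow_zero, mul_one]
      congr 1
      rw [Finset.mul_sum]
      refine Finset.sum_congr rfl fun i _ => ?_
      have h1 := hsucc_ge i
      generalize hE : t i.succ - t 0 - 1 = e at *
      have h : t i.succ - t 0 = e + 1 := by omega
      rw [h, pow_succ]; ring
    rw [hsum]
    have habs : (ε 0).natAbs ≤ 1 := by rcases hε 0 with h|h <;> simp [h]
    have h0 : ε 0 + 3 * n'' = 0 → ε 0 = 0 := by
      intro h; rcases hε 0 with he|he <;> omega
    rw [w3_step _ (ε 0) habs ⟨n'', by ring⟩ h0]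
    have hq : (ε 0 + 3 * n'' - ε 0) / 3 = n'' := by
      rw [add_sub_cancel_left, Int.mul_ediv_cancel_left _ (by norm_num : (3:ℤ) ≠ 0)]
    rw [hq]
    have hmono'' : StrictMono (fun i : Fin m => t i.succ - t 0 - 1) := by
      intro i j hij
      dsimp only
      have h1 := hsucc_ge i
      have h2 := hsucc_ge j
      have : t i.succ < t j.succ := hmono (Fin.succ_lt_succ_iff.mpr hij)
      omega
    rw [ih _ _ hmono'' (fun i => hε i.succ)]
    have : (ε 0).natAbs = 1 := by rcases hε 0 with h|h <;> simp [h]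
    omega

lemma L2 : ∀ (m : ℕ) (k : Fin m → ℕ) (ε : Fin m → ℤ),
    (∀ i j : Fin m, (i : ℕ) < j → k i + 2 ≤ k j) → (∀ i, ε i = 1 ∨ ε i = -1) →
    w2 (∑ i, ε i * 2 ^ k i) = m := by
  intro m
  induction m with
  | zero => intro k ε _ _; simp [w2_zero]
  | succ m ih =>
    intro k ε hgap hε
    have hk0 : ∀ i : Fin (m+1), k 0 ≤ k i := by
      intro i
      rcases Nat.eq_zero_or_pos (i : ℕ) with h | h
      · have : i = 0 := by ext; simp [h]
        rw [this]
      · have := hgap 0 i (by simpa using h)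
        omega
    have hfac : (∑ i, ε i * 2 ^ k i) = 2 ^ (k 0) * ∑ i, ε i * 2 ^ (k i - k 0) := by
      rw [Finset.mul_sum]
      refine Finset.sum_congr rfl fun i _ => ?_
      have hh := hk0 i
      generalize hE : k i - k 0 = e at *
      have h : k i = k 0 + e := by omega
      rw [h, pow_add]; ring
    rw [hfac, w2_pow_mul]
    set n'' : ℤ := ∑ i : Fin m, ε i.succ * 2 ^ (k i.succ - k 0 - 2) with hn''
    have hsucc_ge : ∀ i : Fin m, k 0 + 2 ≤ k i.succ := by
      intro i
      exact hgap 0 i.succ (by simp only [Fin.val_zero, Fin.val_succ]; omega)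
    have hsum : (∑ i : Fin (m+1), ε i * 2 ^ (k i - k 0)) = ε 0 + 4 * n'' := by
      rw [Fin.sum_univ_succ]
      simp only [Nat.sub_self, pow_zero, mul_one]
      congr 1
      rw [Finset.mul_sum]
      refine Finset.sum_congr rfl fun i _ => ?_
      have h1 := hsucc_ge i
      generalize hE : k i.succ - k 0 - 2 = e at *
      have h : k i.succ - k 0 = e + 2 := by omega
      rw [h, pow_add]; ring
    rw [hsum]
    rw [w2_odd _ (ε 0) (hε 0) ⟨n'', by ring⟩]
    have hq : (ε 0 + 4 * n'' - ε 0) / 2 = 2 * n'' := by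
      rw [add_sub_cancel_left]
      omega
    rw [hq, w2_mul2]
    have hgap'' : ∀ i j : Fin m, (i:ℕ) < j → (k i.succ - k 0 - 2) + 2 ≤ (k j.succ - k 0 - 2) := by
      intro i j hij
      have h1 := hsucc_ge i
      have h2 := hsucc_ge j
      have := hgap i.succ j.succ (by simpa using hij)
      omega
    rw [ih _ _ hgap'' (fun i => hε i.succ)]
    omega
lemma w3_pos_aux : ∀ N (n : ℤ), n.natAbs ≤ N → n ≠ 0 → 0 < w3 n := by
  intro N
  induction N using Nat.strong_induction_on with
  | _ N ih =>
    intro n hN hn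
    rw [w3]; simp only [hn, if_false]
    rcases Nat.eq_zero_or_pos (r3 n).natAbs with h | h
    · have h3 : r3 n = 0 := by omega
      have h1 : (n - r3 n)/3 ≠ 0 := by unfold r3 at *; split at h3 <;> omega
      have hlt : ((n - r3 n)/3).natAbs < N := by unfold r3 at *; split <;> omega
      have := ih _ hlt _ le_rfl h1
      omega
    · omega

lemma w3_pos (n : ℤ) (hn : n ≠ 0) : 0 < w3 n := w3_pos_aux n.natAbs n le_rfl hn
lemma E3aux : ∀ (N : ℕ) (n : ℤ), n.natAbs ≤ N → ∃ (m : ℕ) (t : Fin m → ℕ) (ε : Fin m → ℤ),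
    StrictMono t ∧ (∀ i, ε i = 1 ∨ ε i = -1) ∧ n = ∑ i, ε i * 3 ^ t i := by
  intro N
  induction N using Nat.strong_induction_on with
  | _ N ih =>
    intro n hN
    by_cases hn : n = 0
    · exact ⟨0, fun i => i.elim0, fun i => i.elim0, fun i => i.elim0,
        fun i => i.elim0, by simp [hn]⟩
    · set r := r3 n with hr
      set q := (n - r3 n) / 3 with hq
      have hrange : r = 0 ∨ r = 1 ∨ r = -1 := by unfold r; unfold r3; split <;> omega
      have heq : n = 3 * q + r := by unfold q r; unfold r3; split <;> omega
      have hlt : q.natAbs < N := by unfold q; unfold r3; split <;> omega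
      obtain ⟨m, t, ε, hmono, hε, hsum⟩ := ih _ hlt q le_rfl
      rcases hrange with h0 | h1
      · refine ⟨m, fun i => t i + 1, ε, fun i j hij => by simpa using hmono hij, hε, ?_⟩
        rw [heq, h0, hsum]
        rw [add_zero, Finset.mul_sum]
        exact Finset.sum_congr rfl fun i _ => by rw [pow_succ]; ring
      · refine ⟨m + 1, Fin.cases 0 (fun i => t i + 1), Fin.cases r ε, ?_, ?_, ?_⟩
        · intro i j hij
          induction j using Fin.cases with
          | zero => exact absurd hij (by simp)
          | succ j =>
            induction i using Fin.cases with
            | zero => simp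
            | succ i =>
              simp only [Fin.cases_succ]
              have := hmono (Fin.succ_lt_succ_iff.mp hij)
              omega
        · intro i
          induction i using Fin.cases with
          | zero => simpa using h1
          | succ i => simpa using hε i
        · rw [Fin.sum_univ_succ]
          simp only [Fin.cases_zero, Fin.cases_succ, pow_zero, mul_one]
          rw [heq, hsum, Finset.mul_sum]
          rw [add_comm]
          congr 1
          exact Finset.sum_congr rfl fun i _ => by rw [pow_succ]; ring

lemma E2aux : ∀ (N : ℕ) (n : ℤ), n.natAbs ≤ N → ∃ (m : ℕ) (k : Fin m → ℕ) (ε : Fin m → ℤ),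
    (∀ i j : Fin m, (i : ℕ) < j → k i + 2 ≤ k j) ∧ (∀ i, ε i = 1 ∨ ε i = -1) ∧
    n = ∑ i, ε i * 2 ^ k i ∧ ((2:ℤ) ∣ n → ∀ i, 1 ≤ k i) := by
  intro N
  induction N using Nat.strong_induction_on with
  | _ N ih =>
    intro n hN
    by_cases hn : n = 0
    · exact ⟨0, fun i => i.elim0, fun i => i.elim0, fun i => i.elim0,
        fun i => i.elim0, by simp [hn], fun _ i => i.elim0⟩
    · by_cases he : (2:ℤ) ∣ n
      · set q := n / 2 with hq
        have heq : n = 2 * q := by omega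
        have hlt : q.natAbs < N := by omega
        obtain ⟨m, k, ε, hgap, hε, hsum, _⟩ := ih _ hlt q le_rfl
        refine ⟨m, fun i => k i + 1, ε, fun i j hij => by dsimp only; have := hgap i j hij; omega,
          hε, ?_, fun _ i => by dsimp only; omega⟩
        rw [heq, hsum, Finset.mul_sum]
        exact Finset.sum_congr rfl fun i _ => by rw [pow_succ]; ring
      · set r := r4 n with hr
        set q := (n - r4 n) / 2 with hq
        have hrange : r = 1 ∨ r = -1 := by unfold r; unfold r4; split <;> omega
        have heq : n = 2 * q + r := by unfold q r; unfold r4; split <;> omega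
        have hqe : (2:ℤ) ∣ q := by unfold q r at *; unfold r4 at *; split <;> omega
        have hlt : q.natAbs < N := by unfold q; unfold r4; split <;> omega
        obtain ⟨m, k, ε, hgap, hε, hsum, hone⟩ := ih _ hlt q le_rfl
        have hone' := hone hqe
        refine ⟨m + 1, Fin.cases 0 (fun i => k i + 1), Fin.cases r ε, ?_, ?_, ?_, ?_⟩
        · intro i j hij
          induction j using Fin.cases with
          | zero => exact absurd hij (by simp)
          | succ j =>
            induction i using Fin.cases with
            | zero =>
              simp only [Fin.cases_zero, Fin.cases_succ]
              have := hone' j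
              omega
            | succ i =>
              simp only [Fin.cases_succ]
              have := hgap i j (Fin.succ_lt_succ_iff.mp hij)
              omega
        · intro i
          induction i using Fin.cases with
          | zero => simpa using hrange
          | succ i => simpa using hε i
        · rw [Fin.sum_univ_succ]
          simp only [Fin.cases_zero, Fin.cases_succ, pow_zero, mul_one]
          rw [heq, hsum, Finset.mul_sum]
          rw [add_comm]
          congr 1
          exact Finset.sum_congr rfl fun i _ => by rw [pow_succ]; ring
        · intro h2; exact absurd h2 he
lemma U3aux : ∀ (N : ℕ) (n : ℤ), n.natAbs ≤ N → ∀ (m : ℕ) (t : Fin m → ℕ) (ε : Fin m → ℤ)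
    (t' : Fin m → ℕ) (ε' : Fin m → ℤ),
    StrictMono t → (∀ i, ε i = 1 ∨ ε i = -1) →
    StrictMono t' → (∀ i, ε' i = 1 ∨ ε' i = -1) →
    n = ∑ i, ε i * 3 ^ t i → n = ∑ i, ε' i * 3 ^ t' i →
    ∀ i, t i = t' i ∧ ε i = ε' i := by
  intro N
  induction N using Nat.strong_induction_on with
  | _ N ih =>
    intro n hN m t ε t' ε' hm hε hm' hε' hs hs'
    by_cases hn : n = 0
    · have : m = 0 := by rw [hs] at hn; have := L3 m t ε hm hε; rw [hn, w3_zero] at this; omega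
      subst this; exact fun i => i.elim0
    · have hmpos : 0 < m := by
        rcases Nat.eq_zero_or_pos m with h | h
        · subst h; simp at hs; exact absurd hs hn
        · exact h
      obtain ⟨m'', rfl⟩ : ∃ m'', m = m'' + 1 := ⟨m - 1, by omega⟩
      by_cases h3 : (3:ℤ) ∣ n
      -- case 3 ∣ n : all exponents positive
      · have hpos : ∀ i, 1 ≤ t i := by
          intro i
          by_contra hc
          push_neg at hc
          have ht0 : t 0 = 0 := by
            have := hm.monotone (Fin.zero_le i); omega
          -- n ≡ ε 0 mod 3, contradiction with 3 ∣ n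
          have : n - ε 0 = 3 * ∑ j : Fin m'', ε j.succ * 3 ^ (t j.succ - 1) := by
            rw [hs, Fin.sum_univ_succ, ht0]
            simp only [pow_zero, mul_one, add_sub_cancel_left, Finset.mul_sum]
            refine Finset.sum_congr rfl fun j _ => ?_
            have h1 : 1 ≤ t j.succ := by
              have := hm (Fin.succ_pos j); omega
            generalize hE : t j.succ - 1 = e at *
            have h : t j.succ = e + 1 := by omega
            rw [h, pow_succ]; ring
          rcases hε 0 with h|h <;> omega
        have hpos' : ∀ i, 1 ≤ t' i := by
          intro i
          by_contra hc
          push_neg at hc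
          have ht0 : t' 0 = 0 := by
            have := hm'.monotone (Fin.zero_le i); omega
          have : n - ε' 0 = 3 * ∑ j : Fin m'', ε' j.succ * 3 ^ (t' j.succ - 1) := by
            rw [hs', Fin.sum_univ_succ, ht0]
            simp only [pow_zero, mul_one, add_sub_cancel_left, Finset.mul_sum]
            refine Finset.sum_congr rfl fun j _ => ?_
            have h1 : 1 ≤ t' j.succ := by
              have := hm' (Fin.succ_pos j); omega
            generalize hE : t' j.succ - 1 = e at *
            have h : t' j.succ = e + 1 := by omega
            rw [h, pow_succ]; ring
          rcases hε' 0 with h|h <;> omega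
        have hd : n = 3 * ∑ i : Fin (m''+1), ε i * 3 ^ (t i - 1) := by
          rw [hs, Finset.mul_sum]
          refine Finset.sum_congr rfl fun i _ => ?_
          have h1 := hpos i
          generalize hE : t i - 1 = e at *
          have h : t i = e + 1 := by omega
          rw [h, pow_succ]; ring
        have hd' : n = 3 * ∑ i : Fin (m''+1), ε' i * 3 ^ (t' i - 1) := by
          rw [hs', Finset.mul_sum]
          refine Finset.sum_congr rfl fun i _ => ?_
          have h1 := hpos' i
          generalize hE : t' i - 1 = e at *
          have h : t' i = e + 1 := by omega
          rw [h, pow_succ]; ring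
        set q := ∑ i : Fin (m''+1), ε i * 3 ^ (t i - 1) with hqdef
        have hq' : q = ∑ i : Fin (m''+1), ε' i * 3 ^ (t' i - 1) := by omega
        have hqlt : q.natAbs < N := by omega
        have hres := ih _ hqlt q le_rfl (m''+1) (fun i => t i - 1) ε (fun i => t' i - 1) ε'
          (fun i j hij => by dsimp only; have := hm hij; have := hpos i; omega) hε
          (fun i j hij => by dsimp only; have := hm' hij; have := hpos' i; omega) hε'
          hqdef hq'
        intro i
        obtain ⟨h1, h2⟩ := hres i
        have := hpos i; have := hpos' i
        exact ⟨by omega, h2⟩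
      -- case ¬ 3 ∣ n
      · have ht0 : t 0 = 0 := by
          by_contra hc
          apply h3
          rw [hs]
          refine Finset.dvd_sum fun i _ => ?_
          have h1 : 1 ≤ t i := by have := hm.monotone (Fin.zero_le i); omega
          exact Dvd.dvd.mul_left (dvd_pow_self 3 (by omega)) _
        have ht0' : t' 0 = 0 := by
          by_contra hc
          apply h3
          rw [hs']
          refine Finset.dvd_sum fun i _ => ?_
          have h1 : 1 ≤ t' i := by have := hm'.monotone (Fin.zero_le i); omega
          exact Dvd.dvd.mul_left (dvd_pow_self 3 (by omega)) _
        have hpos : ∀ j : Fin m'', 1 ≤ t j.succ := fun j => by have := hm (Fin.succ_pos j); omega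
        have hpos' : ∀ j : Fin m'', 1 ≤ t' j.succ := fun j => by have := hm' (Fin.succ_pos j); omega
        have hd : n = ε 0 + 3 * ∑ j : Fin m'', ε j.succ * 3 ^ (t j.succ - 1) := by
          rw [hs, Fin.sum_univ_succ, ht0]
          simp only [pow_zero, mul_one, Finset.mul_sum]
          congr 1
          refine Finset.sum_congr rfl fun j _ => ?_
          have h1 := hpos j
          generalize hE : t j.succ - 1 = e at *
          have h : t j.succ = e + 1 := by omega
          rw [h, pow_succ]; ring
        have hd' : n = ε' 0 + 3 * ∑ j : Fin m'', ε' j.succ * 3 ^ (t' j.succ - 1) := by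
          rw [hs', Fin.sum_univ_succ, ht0']
          simp only [pow_zero, mul_one, Finset.mul_sum]
          congr 1
          refine Finset.sum_congr rfl fun j _ => ?_
          have h1 := hpos' j
          generalize hE : t' j.succ - 1 = e at *
          have h : t' j.succ = e + 1 := by omega
          rw [h, pow_succ]; ring
        set q := ∑ j : Fin m'', ε j.succ * 3 ^ (t j.succ - 1) with hqdef
        set q' := ∑ j : Fin m'', ε' j.succ * 3 ^ (t' j.succ - 1) with hqdef'
        have he0 : ε 0 = ε' 0 := by rcases hε 0 with h|h <;> rcases hε' 0 with h'|h' <;> omega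
        have hqq : q = q' := by omega
        have hqlt : q.natAbs < N := by rcases hε 0 with h|h <;> omega
        have hres := ih _ hqlt q le_rfl m'' (fun j => t j.succ - 1) (fun j => ε j.succ)
          (fun j => t' j.succ - 1) (fun j => ε' j.succ)
          (fun i j hij => by dsimp only; have := hm (Fin.succ_lt_succ_iff.mpr hij); have := hpos i; omega)
          (fun j => hε j.succ)
          (fun i j hij => by dsimp only; have := hm' (Fin.succ_lt_succ_iff.mpr hij); have := hpos' i; omega)
          (fun j => hε' j.succ)
          hqdef (hqq.trans hqdef')
        intro i
        induction i using Fin.cases with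
        | zero => exact ⟨by omega, he0⟩
        | succ i =>
          obtain ⟨h1, h2⟩ := hres i
          have := hpos i; have := hpos' i
          exact ⟨by omega, h2⟩
lemma w2_odd' (x r : ℤ) (hr : r = 1 ∨ r = -1) : w2 (4*x + r) = 1 + w2 (2*x) := by
  have h := w2_odd (4*x + r) r hr ⟨x, by ring⟩
  have h2 : (4*x + r - r) / 2 = 2*x := by omega
  rwa [h2] at h

lemma w2_BC : ∀ (N : ℕ) (n : ℤ), n.natAbs ≤ N →
    (∀ s : ℤ, s = 1 ∨ s = -1 → w2 n ≤ 1 + w2 (n - s)) ∧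
    (n % 2 = 0 → ∀ s : ℤ, s = 1 ∨ s = -1 → w2 n ≤ w2 (n + s)) := by
  intro N
  induction N using Nat.strong_induction_on with
  | _ N ih =>
    intro n hN
    by_cases hn : n = 0
    · subst hn
      constructor
      · intro s hs; simp [w2_zero]
      · intro _ s hs; simp [w2_zero]
    · have h4 : n % 4 = 0 ∨ n % 4 = 1 ∨ n % 4 = 2 ∨ n % 4 = 3 := by omega
      rcases h4 with h | h | h | h
      · -- n = 4u
        obtain ⟨u, rfl⟩ : ∃ u, n = 4 * u := ⟨n / 4, by omega⟩
        have e1 : w2 (4*u) = w2 (2*u) := by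
          have : (4:ℤ)*u = 2*(2*u) := by ring
          rw [this, w2_mul2]
        constructor
        · intro s hs
          have e2 : w2 (4*u - s) = 1 + w2 (2*u) := by
            have : (4:ℤ)*u - s = 4*u + (-s) := by ring
            rw [this, w2_odd' u (-s) (by omega)]
          omega
        · intro _ s hs
          have e2 : w2 (4*u + s) = 1 + w2 (2*u) := w2_odd' u s hs
          omega
      · -- n = 4u+1
        obtain ⟨u, rfl⟩ : ∃ u, n = 4 * u + 1 := ⟨n / 4, by omega⟩
        have e1 : w2 (4*u + 1) = 1 + w2 (2*u) := w2_odd' u 1 (by omega)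
        constructor
        · intro s hs
          rcases hs with rfl | rfl
          · have e2 : w2 (4*u + 1 - 1) = w2 (2*u) := by
              have : (4:ℤ)*u + 1 - 1 = 2*(2*u) := by ring
              rw [this, w2_mul2]
            omega
          · have e2 : w2 (4*u + 1 - (-1)) = w2 (2*u + 1) := by
              have : (4:ℤ)*u + 1 - (-1) = 2*(2*u + 1) := by ring
              rw [this, w2_mul2]
            have hC := (ih (N-1) (by omega) (2*u) (by omega)).2 (by omega) 1 (by omega)
            omega
        · intro he; omega
      · -- n = 4u+2
        obtain ⟨u, rfl⟩ : ∃ u, n = 4 * u + 2 := ⟨n / 4, by omega⟩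
        have e1 : w2 (4*u + 2) = w2 (2*u + 1) := by
          have : (4:ℤ)*u + 2 = 2*(2*u + 1) := by ring
          rw [this, w2_mul2]
        have hB := (ih (N-1) (by omega) (2*u + 1) (by omega)).1
        constructor
        · intro s hs
          rcases hs with rfl | rfl
          · have e2 : w2 (4*u + 2 - 1) = 1 + w2 (2*u) := by
              rw [show (4:ℤ)*u + 2 - 1 = 4*u + 1 by ring]; exact w2_odd' u 1 (by omega)
            have := hB 1 (by omega)
            have h3 : (2:ℤ)*u + 1 - 1 = 2*u := by ring
            rw [h3] at this
            omega
          · have e2 : w2 (4*u + 2 - (-1)) = 1 + w2 (2*(u+1)) := by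
              have : (4:ℤ)*u + 2 - (-1) = 4*(u+1) + (-1) := by ring
              rw [this, w2_odd' (u+1) (-1) (by omega)]
            have := hB (-1) (by omega)
            have h3 : (2:ℤ)*u + 1 - (-1) = 2*(u+1) := by ring
            rw [h3] at this
            omega
        · intro _ s hs
          rcases hs with rfl | rfl
          · have e2 : w2 (4*u + 2 + 1) = 1 + w2 (2*(u+1)) := by
              have : (4:ℤ)*u + 2 + 1 = 4*(u+1) + (-1) := by ring
              rw [this, w2_odd' (u+1) (-1) (by omega)]
            have := hB (-1) (by omega)
            have h3 : (2:ℤ)*u + 1 - (-1) = 2*(u+1) := by ring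
            rw [h3] at this
            omega
          · have e2 : w2 (4*u + 2 + (-1)) = 1 + w2 (2*u) := by
              rw [show (4:ℤ)*u + 2 + (-1) = 4*u + 1 by ring]; exact w2_odd' u 1 (by omega)
            have := hB 1 (by omega)
            have h3 : (2:ℤ)*u + 1 - 1 = 2*u := by ring
            rw [h3] at this
            omega
      · -- n = 4u+3 = 4(u+1) - 1
        obtain ⟨u, rfl⟩ : ∃ u, n = 4 * u + 3 := ⟨n / 4, by omega⟩
        have e1 : w2 (4*u + 3) = 1 + w2 (2*(u+1)) := by
          have : (4:ℤ)*u + 3 = 4*(u+1) + (-1) := by ring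
          rw [this, w2_odd' (u+1) (-1) (by omega)]
        constructor
        · intro s hs
          rcases hs with rfl | rfl
          · have e2 : w2 (4*u + 3 - 1) = w2 (2*u + 1) := by
              have : (4:ℤ)*u + 3 - 1 = 2*(2*u + 1) := by ring
              rw [this, w2_mul2]
            have hC := (ih (N-1) (by omega) (2*(u+1)) (by omega)).2 (by omega) (-1) (by omega)
            have h3 : (2:ℤ)*(u+1) + (-1) = 2*u + 1 := by ring
            rw [h3] at hC
            omega
          · have e2 : w2 (4*u + 3 - (-1)) = w2 (2*(u+1)) := by
              have : (4:ℤ)*u + 3 - (-1) = 2*(2*(u+1)) := by ring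
              rw [this, w2_mul2]
            omega
        · intro he; omega

lemma w2_C (u : ℤ) (hu : u % 2 = 0) (s : ℤ) (hs : s = 1 ∨ s = -1) : w2 u ≤ w2 (u + s) :=
  (w2_BC u.natAbs u le_rfl).2 hu s hs

lemma w2_B (n : ℤ) (s : ℤ) (hs : s = 1 ∨ s = -1) : w2 n ≤ 1 + w2 (n - s) :=
  (w2_BC n.natAbs n le_rfl).1 s hs

lemma zero_mem_Ag (g : ℤ) : (0:ℤ) ∈ Ag g := Or.inl rfl
lemma pow_mem_Ag (g : ℤ) (i : ℕ) : (g ^ i) ∈ Ag g := Or.inr ⟨i, Or.inl rfl⟩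
lemma neg_pow_mem_Ag (g : ℤ) (i : ℕ) : (-g ^ i) ∈ Ag g := Or.inr ⟨i, Or.inr rfl⟩
lemma one_mem_Ag (g : ℤ) : (1:ℤ) ∈ Ag g := by have := pow_mem_Ag g 0; simpa using this
lemma neg_one_mem_Ag (g : ℤ) : (-1:ℤ) ∈ Ag g := by have := neg_pow_mem_Ag g 0; simpa using this
lemma sign_mem_Ag (g x : ℤ) (h : x = 1 ∨ x = -1) : x ∈ Ag g := by
  rcases h with rfl | rfl
  exacts [one_mem_Ag g, neg_one_mem_Ag g]

lemma Ag_cases (g : ℤ) (hg : 2 ≤ g) (x : ℤ) (hx : x ∈ Ag g) :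
    x = 0 ∨ x = 1 ∨ x = -1 ∨ (g ∣ x ∧ g.natAbs ≤ x.natAbs ∧ x / g ∈ Ag g) := by
  rcases hx with h | ⟨i, hi | hi⟩
  · exact Or.inl h
  · cases i with
    | zero => simp at hi; tauto
    | succ i =>
      right; right; right
      subst hi
      have hpow : (1:ℤ) ≤ g ^ i := one_le_pow₀ (by omega)
      refine ⟨⟨g ^ i, by rw [pow_succ]; ring⟩, ?_, ?_⟩
      · rw [pow_succ]
        have : g ≤ g^i * g := by nlinarith
        omega
      · rw [pow_succ, mul_comm, Int.mul_ediv_cancel_left _ (by omega)]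
        exact pow_mem_Ag g i
  · cases i with
    | zero => simp at hi; tauto
    | succ i =>
      right; right; right
      subst hi
      have hpow : (1:ℤ) ≤ g ^ i := one_le_pow₀ (by omega)
      refine ⟨⟨-g ^ i, by rw [pow_succ]; ring⟩, ?_, ?_⟩
      · rw [pow_succ]
        have : g ≤ g^i * g := by nlinarith
        omega
      · rw [pow_succ, mul_comm, neg_mul_eq_mul_neg, Int.mul_ediv_cancel_left _ (by omega)]
        exact neg_pow_mem_Ag g i

lemma mul_mem_Ag (g x : ℤ) (hx : x ∈ Ag g) : g * x ∈ Ag g := by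
  rcases hx with h | ⟨i, hi | hi⟩
  · simp only [Set.mem_singleton_iff] at h; subst h; simpa using zero_mem_Ag g
  · subst hi; rw [← pow_succ']; exact pow_mem_Ag g (i+1)
  · subst hi; rw [mul_neg, ← pow_succ']; exact neg_pow_mem_Ag g (i+1)

-- list helper lemmas
lemma list_sum_natAbs_le (l : List ℤ) : l.sum.natAbs ≤ (l.map Int.natAbs).sum := by
  induction l with
  | nil => simp
  | cons a l ih => simp only [List.sum_cons, List.map_cons]; omega

lemma list_div_sum (g : ℤ) (l : List ℤ) (h : ∀ x ∈ l, g ∣ x) :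
    l.sum = g * (l.map (· / g)).sum := by
  induction l with
  | nil => simp
  | cons a l ih =>
    have ha := h a (by simp)
    simp only [List.sum_cons, List.map_cons]
    rw [ih (fun x hx => h x (by simp [hx]))]
    obtain ⟨y, rfl⟩ := ha
    by_cases hg : g = 0
    · subst hg; simp
    · rw [Int.mul_ediv_cancel_left _ hg]; ring

lemma list_div_natAbs (g : ℤ) (hg : 0 < g) (l : List ℤ) (h : ∀ x ∈ l, g ∣ x) :
    (l.map Int.natAbs).sum = g.natAbs * ((l.map (· / g)).map Int.natAbs).sum := by
  induction l with
  | nil => simp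
  | cons a l ih =>
    have ha := h a (by simp)
    simp only [List.map_cons, List.sum_cons]
    rw [ih (fun x hx => h x (by simp [hx]))]
    obtain ⟨y, rfl⟩ := ha
    rw [Int.mul_ediv_cancel_left _ (by omega), Int.natAbs_mul, Nat.mul_add]

lemma list_pm_one (l : List ℤ) (h : ∀ x ∈ l, x = 1 ∨ x = -1) :
    (l.map Int.natAbs).sum = l.length ∧ l.sum.natAbs ≤ l.length ∧ (l.sum - l.length) % 2 = 0 := by
  induction l with
  | nil => simp
  | cons a l ih =>
    have ha := h a (by simp)
    obtain ⟨h1, h2, h3⟩ := ih (fun x hx => h x (by simp [hx]))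
    simp only [List.map_cons, List.sum_cons, List.length_cons]
    rcases ha with rfl | rfl <;> constructor <;> simp <;> push_cast <;> omega

lemma list_replicate_facts (k : ℕ) (x : ℤ) (hx : x = 1 ∨ x = -1) :
    (List.replicate k x).sum = k * x ∧ ((List.replicate k x).map Int.natAbs).sum = k := by
  constructor
  · rw [List.sum_replicate, nsmul_eq_mul]
  · rw [List.map_replicate, List.sum_replicate, smul_eq_mul]
    rcases hx with rfl | rfl <;> simp
lemma list_ge_two (g : ℕ) (l : List ℤ) (h : ∀ x ∈ l, g ≤ x.natAbs) :
    g * l.length ≤ (l.map Int.natAbs).sum := by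
  induction l with
  | nil => simp
  | cons a l ih =>
    have := h a (by simp)
    have := ih (fun x hx => h x (by simp [hx]))
    simp only [List.map_cons, List.sum_cons, List.length_cons]
    rw [Nat.mul_add]
    omega

lemma min2 : ∀ (N : ℕ) (l : List ℤ), (l.map Int.natAbs).sum + l.length ≤ N →
    (∀ a ∈ l, a ∈ Ag 2) → w2 l.sum ≤ l.length := by
  intro N
  induction N using Nat.strong_induction_on with
  | _ N ih =>
    intro l hN hmem
    by_cases hnil : l = []
    · subst hnil; simp [w2_zero]
    have hlpos : 1 ≤ l.length := List.length_pos_iff.mpr hnil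
    by_cases hz : (0:ℤ) ∈ l
    · have hperm := List.perm_cons_erase hz
      have hsum : l.sum = (l.erase 0).sum := by
        have := hperm.sum_eq; simp only [List.sum_cons] at this; omega
      have hlen : l.length = (l.erase 0).length + 1 := by
        have := hperm.length_eq; simpa using this
      have hmap : (l.map Int.natAbs).sum = ((l.erase 0).map Int.natAbs).sum := by
        have := (hperm.map Int.natAbs).sum_eq
        simpa using this
      have hres := ih (N-1) (by omega) (l.erase 0) (by omega)
        (fun a ha => hmem a (List.erase_subset ha))
      rw [hsum]; omega
    · set p : ℤ → Bool := fun x => x == 1 || x == -1 with hp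
      set ls := l.filter p with hlsdef
      set lb := l.filter (fun x => !p x) with hlbdef
      have hperm := List.filter_append_perm p l
      have hls1 : ∀ x ∈ ls, x = 1 ∨ x = -1 := by
        intro x hx
        have h2 := (List.mem_filter.mp hx).2
        simp only [hp, Bool.or_eq_true, beq_iff_eq] at h2
        exact h2
      have hlb1 : ∀ x ∈ lb, (2:ℤ) ∣ x ∧ 2 ≤ x.natAbs ∧ x / 2 ∈ Ag 2 := by
        intro x hx
        obtain ⟨hxl, hxp⟩ := List.mem_filter.mp hx
        have hxa := hmem x hxl
        rcases Ag_cases 2 (by norm_num) x hxa with h|h|h|h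
        · exact absurd (h ▸ hxl) hz
        · simp [hp, h] at hxp
        · simp [hp, h] at hxp
        · simpa using h
      set l' := lb.map (· / 2) with hl'def
      have hl'mem : ∀ a ∈ l', a ∈ Ag 2 := by
        intro a ha
        obtain ⟨x, hx, rfl⟩ := List.mem_map.mp ha
        exact (hlb1 x hx).2.2
      have hsum_split : l.sum = ls.sum + lb.sum := by rw [← hperm.sum_eq, List.sum_append]
      have hlen_split : l.length = ls.length + lb.length := by
        rw [← hperm.length_eq, List.length_append]
      have hmap_split : (l.map Int.natAbs).sum
          = (ls.map Int.natAbs).sum + (lb.map Int.natAbs).sum := by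
        rw [← (hperm.map Int.natAbs).sum_eq, List.map_append, List.sum_append]
      obtain ⟨hνs, hcs, hcpar⟩ := list_pm_one ls hls1
      have hdiv : lb.sum = 2 * l'.sum := list_div_sum 2 lb (fun x hx => (hlb1 x hx).1)
      have hdivA : (lb.map Int.natAbs).sum = 2 * (l'.map Int.natAbs).sum := by
        have := list_div_natAbs 2 (by norm_num) lb (fun x hx => (hlb1 x hx).1)
        rw [hl'def, List.map_map]
        simpa using this
      have hlen' : l'.length = lb.length := List.length_map _
      have hbig : 2 * lb.length ≤ (lb.map Int.natAbs).sum :=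
        list_ge_two 2 lb (fun x hx => (hlb1 x hx).2.1)
      by_cases he : l.sum % 2 = 0
      · -- even case
        have hceven : ls.sum % 2 = 0 := by omega
        set d := ls.sum / 2 with hd
        have hd2 : 2 * d = ls.sum := by omega
        set σ : ℤ := if 0 ≤ d then 1 else -1 with hσ
        have hσpm : σ = 1 ∨ σ = -1 := by unfold σ; split <;> simp
        obtain ⟨hrs, hra⟩ := list_replicate_facts d.natAbs σ hσpm
        set L := l' ++ List.replicate d.natAbs σ with hL
        have hLmem : ∀ a ∈ L, a ∈ Ag 2 := by
          intro a ha
          rcases List.mem_append.mp ha with h | h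
          · exact hl'mem a h
          · rw [List.eq_of_mem_replicate h]; exact sign_mem_Ag 2 σ hσpm
        have hLsum : L.sum = l'.sum + d := by
          rw [List.sum_append, hrs]
          have : (d.natAbs : ℤ) * σ = d := by unfold σ; split <;> omega
          omega
        have hLlen : L.length = l'.length + d.natAbs := by
          rw [List.length_append, List.length_replicate]
        have hLmap : (L.map Int.natAbs).sum = (l'.map Int.natAbs).sum + d.natAbs := by
          rw [List.map_append, List.sum_append, hra]
        have hres := ih (N-1) (by omega) L (by omega) hLmem
        rw [hLsum] at hres
        have hw : w2 l.sum = w2 (l'.sum + d) := by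
          rw [show l.sum = 2 * (l'.sum + d) by omega, w2_mul2]
        omega
      · -- odd case
        set r := r4 l.sum with hrdef
        have hr1 : r = 1 ∨ r = -1 := by unfold r; unfold r4; split <;> omega
        have hr2 : (4:ℤ) ∣ l.sum - r := by unfold r; unfold r4; split <;> omega
        have hw := w2_odd l.sum r hr1 hr2
        by_cases hsp : ls.sum = -r ∧ ls.length = 1
        · have hq : (l.sum - r)/2 = l'.sum - r := by omega
          have heven : (l'.sum - r) % 2 = 0 := by omega
          have hC := w2_C (l'.sum - r) heven r hr1
          rw [sub_add_cancel] at hC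
          have hres := ih (N-1) (by omega) l' (by omega) hl'mem
          rw [hw, hq]
          omega
        · set d := (ls.sum - r)/2 with hd
          have hd2 : 2 * d = ls.sum - r := by omega
          set σ : ℤ := if 0 ≤ d then 1 else -1 with hσ
          have hσpm : σ = 1 ∨ σ = -1 := by unfold σ; split <;> simp
          obtain ⟨hrs, hra⟩ := list_replicate_facts d.natAbs σ hσpm
          set L := l' ++ List.replicate d.natAbs σ with hL
          have hLmem : ∀ a ∈ L, a ∈ Ag 2 := by
            intro a ha
            rcases List.mem_append.mp ha with h | h
            · exact hl'mem a h
            · rw [List.eq_of_mem_replicate h]; exact sign_mem_Ag 2 σ hσpm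
          have hLsum : L.sum = l'.sum + d := by
            rw [List.sum_append, hrs]
            have : (d.natAbs : ℤ) * σ = d := by unfold σ; split <;> omega
            omega
          have hLlen : L.length = l'.length + d.natAbs := by
            rw [List.length_append, List.length_replicate]
          have hLmap : (L.map Int.natAbs).sum = (l'.map Int.natAbs).sum + d.natAbs := by
            rw [List.map_append, List.sum_append, hra]
          have hres := ih (N-1) (by omega) L (by omega) hLmem
          rw [hLsum] at hres
          have hq : (l.sum - r)/2 = l'.sum + d := by omega
          rw [hw, hq]
          omega

lemma min3 : ∀ (N : ℕ) (l : List ℤ), (l.map Int.natAbs).sum + l.length ≤ N →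
    (∀ a ∈ l, a ∈ Ag 3) → w3 l.sum ≤ l.length := by
  intro N
  induction N using Nat.strong_induction_on with
  | _ N ih =>
    intro l hN hmem
    by_cases hn0 : l.sum = 0
    · rw [hn0, w3_zero]; omega
    have hlpos : 1 ≤ l.length := by
      rcases l with _ | ⟨a, l⟩
      · simp at hn0
      · simp
    by_cases hz : (0:ℤ) ∈ l
    · have hperm := List.perm_cons_erase hz
      have hsum : l.sum = (l.erase 0).sum := by
        have := hperm.sum_eq; simp only [List.sum_cons] at this; omega
      have hlen : l.length = (l.erase 0).length + 1 := by
        have := hperm.length_eq; simpa using this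
      have hmap : (l.map Int.natAbs).sum = ((l.erase 0).map Int.natAbs).sum := by
        have := (hperm.map Int.natAbs).sum_eq
        simpa using this
      have hres := ih (N-1) (by omega) (l.erase 0) (by omega)
        (fun a ha => hmem a (List.erase_subset ha))
      rw [hsum]; omega
    · set p : ℤ → Bool := fun x => x == 1 || x == -1 with hp
      set ls := l.filter p with hlsdef
      set lb := l.filter (fun x => !p x) with hlbdef
      have hperm := List.filter_append_perm p l
      have hls1 : ∀ x ∈ ls, x = 1 ∨ x = -1 := by
        intro x hx
        have h2 := (List.mem_filter.mp hx).2
        simp only [hp, Bool.or_eq_true, beq_iff_eq] at h2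
        exact h2
      have hlb1 : ∀ x ∈ lb, (3:ℤ) ∣ x ∧ 3 ≤ x.natAbs ∧ x / 3 ∈ Ag 3 := by
        intro x hx
        obtain ⟨hxl, hxp⟩ := List.mem_filter.mp hx
        have hxa := hmem x hxl
        rcases Ag_cases 3 (by norm_num) x hxa with h|h|h|h
        · exact absurd (h ▸ hxl) hz
        · simp [hp, h] at hxp
        · simp [hp, h] at hxp
        · simpa using h
      set l' := lb.map (· / 3) with hl'def
      have hl'mem : ∀ a ∈ l', a ∈ Ag 3 := by
        intro a ha
        obtain ⟨x, hx, rfl⟩ := List.mem_map.mp ha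
        exact (hlb1 x hx).2.2
      have hsum_split : l.sum = ls.sum + lb.sum := by rw [← hperm.sum_eq, List.sum_append]
      have hlen_split : l.length = ls.length + lb.length := by
        rw [← hperm.length_eq, List.length_append]
      have hmap_split : (l.map Int.natAbs).sum
          = (ls.map Int.natAbs).sum + (lb.map Int.natAbs).sum := by
        rw [← (hperm.map Int.natAbs).sum_eq, List.map_append, List.sum_append]
      obtain ⟨hνs, hcs, hcpar⟩ := list_pm_one ls hls1
      have hdiv : lb.sum = 3 * l'.sum := list_div_sum 3 lb (fun x hx => (hlb1 x hx).1)
      have hdivA : (lb.map Int.natAbs).sum = 3 * (l'.map Int.natAbs).sum := by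
        have := list_div_natAbs 3 (by norm_num) lb (fun x hx => (hlb1 x hx).1)
        rw [hl'def, List.map_map]
        simpa using this
      have hlen' : l'.length = lb.length := List.length_map _
      have hbig : 3 * lb.length ≤ (lb.map Int.natAbs).sum :=
        list_ge_two 3 lb (fun x hx => (hlb1 x hx).2.1)
      set r := r3 l.sum with hrdef
      have hr1 : r = 0 ∨ r = 1 ∨ r = -1 := by unfold r; unfold r3; split <;> omega
      have hr2 : (3:ℤ) ∣ l.sum - r := by unfold r; unfold r3; split <;> omega
      have hrabs : r.natAbs ≤ 1 := by omega
      have hw := w3_step l.sum r hrabs hr2 (fun h => absurd h hn0)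
      set d := (ls.sum - r)/3 with hd
      have hd2 : 3 * d = ls.sum - r := by omega
      set σ : ℤ := if 0 ≤ d then 1 else -1 with hσ
      have hσpm : σ = 1 ∨ σ = -1 := by unfold σ; split <;> simp
      obtain ⟨hrs, hra⟩ := list_replicate_facts d.natAbs σ hσpm
      set L := l' ++ List.replicate d.natAbs σ with hL
      have hLmem : ∀ a ∈ L, a ∈ Ag 3 := by
        intro a ha
        rcases List.mem_append.mp ha with h | h
        · exact hl'mem a h
        · rw [List.eq_of_mem_replicate h]; exact sign_mem_Ag 3 σ hσpm
      have hLsum : L.sum = l'.sum + d := by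
        rw [List.sum_append, hrs]
        have : (d.natAbs : ℤ) * σ = d := by unfold σ; split <;> omega
        omega
      have hLlen : L.length = l'.length + d.natAbs := by
        rw [List.length_append, List.length_replicate]
      have hLmap : (L.map Int.natAbs).sum = (l'.map Int.natAbs).sum + d.natAbs := by
        rw [List.map_append, List.sum_append, hra]
      have hres := ih (N-1) (by omega) L (by omega) hLmem
      rw [hLsum] at hres
      have hq : (l.sum - r)/3 = l'.sum + d := by omega
      rw [hw, hq]
      omega
-- representation lists achieving the weight
lemma rep2 : ∀ (N : ℕ) (n : ℤ), n.natAbs ≤ N →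
    ∃ l : List ℤ, (∀ a ∈ l, a ∈ Ag 2) ∧ l.sum = n ∧ l.length = w2 n := by
  intro N
  induction N using Nat.strong_induction_on with
  | _ N ih =>
    intro n hN
    by_cases hn : n = 0
    · exact ⟨[], by simp, by simp [hn], by simp [hn, w2_zero]⟩
    by_cases he : (2:ℤ) ∣ n
    · obtain ⟨l, hmem, hsum, hlen⟩ := ih (N-1) (by omega) (n/2) (by omega)
      refine ⟨l.map (fun x => 2 * x), ?_, ?_, ?_⟩
      · intro a ha
        obtain ⟨x, hx, rfl⟩ := List.mem_map.mp ha
        exact mul_mem_Ag 2 x (hmem x hx)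
      · rw [List.sum_map_mul_left]; simp only [List.map_id']; omega
      · rw [List.length_map, hlen, w2_even n he]
    · have hr1 : r4 n = 1 ∨ r4 n = -1 := by unfold r4; split <;> omega
      have hr2 : (4:ℤ) ∣ n - r4 n := by unfold r4; split <;> omega
      have hlt : ((n - r4 n)/2).natAbs ≤ N - 1 := by unfold r4 at *; split <;> omega
      obtain ⟨l, hmem, hsum, hlen⟩ := ih (N-1) (by omega) ((n - r4 n)/2) hlt
      refine ⟨r4 n :: l.map (fun x => 2 * x), ?_, ?_, ?_⟩
      · intro a ha
        rcases List.mem_cons.mp ha with rfl | ha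
        · exact sign_mem_Ag 2 _ hr1
        · obtain ⟨x, hx, rfl⟩ := List.mem_map.mp ha
          exact mul_mem_Ag 2 x (hmem x hx)
      · rw [List.sum_cons, List.sum_map_mul_left]; simp only [List.map_id']; omega
      · rw [List.length_cons, List.length_map, hlen, w2_odd n (r4 n) hr1 hr2]
        omega

lemma rep3 : ∀ (N : ℕ) (n : ℤ), n.natAbs ≤ N →
    ∃ l : List ℤ, (∀ a ∈ l, a ∈ Ag 3) ∧ l.sum = n ∧ l.length = w3 n := by
  intro N
  induction N using Nat.strong_induction_on with
  | _ N ih =>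
    intro n hN
    by_cases hn : n = 0
    · exact ⟨[], by simp, by simp [hn], by simp [hn, w3_zero]⟩
    have hr0 : (r3 n).natAbs ≤ 1 := by unfold r3; split <;> omega
    have hr2 : (3:ℤ) ∣ n - r3 n := by unfold r3; split <;> omega
    have hlt : ((n - r3 n)/3).natAbs ≤ N - 1 := by unfold r3 at *; split <;> omega
    have hw := w3_step n (r3 n) hr0 hr2 (fun h => absurd h hn)
    obtain ⟨l, hmem, hsum, hlen⟩ := ih (N-1) (by omega) ((n - r3 n)/3) hlt
    by_cases hz : r3 n = 0
    · refine ⟨l.map (fun x => 3 * x), ?_, ?_, ?_⟩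
      · intro a ha
        obtain ⟨x, hx, rfl⟩ := List.mem_map.mp ha
        exact mul_mem_Ag 3 x (hmem x hx)
      · rw [List.sum_map_mul_left]; simp only [List.map_id']; omega
      · rw [List.length_map, hlen, hw, hz]; simp
    · have hr1 : r3 n = 1 ∨ r3 n = -1 := by omega
      refine ⟨r3 n :: l.map (fun x => 3 * x), ?_, ?_, ?_⟩
      · intro a ha
        rcases List.mem_cons.mp ha with rfl | ha
        · exact sign_mem_Ag 3 _ hr1
        · obtain ⟨x, hx, rfl⟩ := List.mem_map.mp ha
          exact mul_mem_Ag 3 x (hmem x hx)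
      · rw [List.sum_cons, List.sum_map_mul_left]; simp only [List.map_id']; omega
      · rw [List.length_cons, List.length_map, hlen, hw]
        rcases hr1 with h | h <;> rw [h] <;> simp <;> omega

lemma lg2_eq (n : ℤ) : lg 2 n = w2 n := by
  obtain ⟨l, hmem, hsum, hlen⟩ := rep2 n.natAbs n le_rfl
  apply le_antisymm
  · exact Nat.sInf_le ⟨l, hmem, hsum, hlen⟩
  · refine le_csInf ⟨w2 n, l, hmem, hsum, hlen⟩ ?_
    rintro h ⟨l', hmem', hsum', rfl⟩
    calc w2 n = w2 l'.sum := by rw [hsum']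
    _ ≤ l'.length := min2 _ l' le_rfl hmem'

lemma lg3_eq (n : ℤ) : lg 3 n = w3 n := by
  obtain ⟨l, hmem, hsum, hlen⟩ := rep3 n.natAbs n le_rfl
  apply le_antisymm
  · exact Nat.sInf_le ⟨l, hmem, hsum, hlen⟩
  · refine le_csInf ⟨w3 n, l, hmem, hsum, hlen⟩ ?_
    rintro h ⟨l', hmem', hsum', rfl⟩
    calc w3 n = w3 l'.sum := by rw [hsum']
    _ ≤ l'.length := min3 _ l' le_rfl hmem'

-- helper: positions grow at least 2i
lemma gap_ge (m : ℕ) (k : Fin m → ℕ)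
    (hgap : ∀ i j : Fin m, (i : ℕ) < j → k i + 2 ≤ k j) :
    ∀ i : Fin m, 2 * (i:ℕ) ≤ k i := by
  have key : ∀ j : ℕ, ∀ hj : j < m, 2 * j ≤ k ⟨j, hj⟩ := by
    intro j
    induction j with
    | zero => intro hj; omega
    | succ j ihj =>
      intro hj
      have h1 := ihj (by omega)
      have h2 := hgap ⟨j, by omega⟩ ⟨j+1, hj⟩ (by simp)
      omega
  intro i
  have := key i.val i.isLt
  simpa using this

lemma shift_strictMono (m : ℕ) (k : Fin m → ℕ)
    (hgap : ∀ i j : Fin m, (i : ℕ) < j → k i + 2 ≤ k j) :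
    StrictMono (fun i : Fin m => k i - (i:ℕ)) := by
  have hk2 := gap_ge m k hgap
  cases m with
  | zero => exact fun a => a.elim0
  | succ m0 =>
    rw [Fin.strictMono_iff_lt_succ]
    intro i
    have h2 := hgap i.castSucc i.succ (by simp)
    have h1 := hk2 i.castSucc
    simp only [Fin.coe_castSucc, Fin.val_succ] at *
    omega

theorem stmt15 (f : ℤ → ℤ)
    (hf : ∀ (m : ℕ) (k : Fin m → ℕ) (ε : Fin m → ℤ),
      (∀ i j : Fin m, (i : ℕ) < j → k i + 2 ≤ k j) →
      (∀ i, ε i = 1 ∨ ε i = -1) →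
      f (∑ i, ε i * 2 ^ k i) = ∑ i, ε i * 3 ^ (k i - (i : ℕ))) :
    Function.Bijective f ∧ ∀ n : ℤ, lg 2 n = lg 3 (f n) := by
  constructor
  · constructor
    · -- injective
      intro a b hab
      obtain ⟨m, k, ε, hgap, hε, hsum, _⟩ := E2aux a.natAbs a le_rfl
      obtain ⟨m', k', ε', hgap', hε', hsum', _⟩ := E2aux b.natAbs b le_rfl
      have hfa : f a = ∑ i, ε i * 3 ^ (k i - (i:ℕ)) := by rw [hsum]; exact hf m k ε hgap hε
      have hfb : f b = ∑ i, ε' i * 3 ^ (k' i - (i:ℕ)) := by rw [hsum']; exact hf m' k' ε' hgap' hε'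
      have hmt := shift_strictMono m k hgap
      have hmt' := shift_strictMono m' k' hgap'
      have hw : w3 (f a) = m := by rw [hfa]; exact L3 m _ ε hmt hε
      have hw' : w3 (f b) = m' := by rw [hfb]; exact L3 m' _ ε' hmt' hε'
      have hmm : m = m' := by rw [← hw, ← hw', hab]
      subst hmm
      have hU := U3aux (f a).natAbs (f a) le_rfl m
        (fun i => k i - (i:ℕ)) ε (fun i => k' i - (i:ℕ)) ε'
        hmt hε hmt' hε' hfa (by rw [hab]; exact hfb)
      have hk2 := gap_ge m k hgap
      have hk2' := gap_ge m k' hgap'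
      rw [hsum, hsum']
      apply Finset.sum_congr rfl
      intro i _
      obtain ⟨h1, h2⟩ := hU i
      have e1 := hk2 i
      have e2 := hk2' i
      have : k i = k' i := by omega
      rw [this, h2]
    · -- surjective
      intro y
      obtain ⟨m, t, ε, hmono, hε, hsum⟩ := E3aux y.natAbs y le_rfl
      refine ⟨∑ i, ε i * 2 ^ (t i + (i:ℕ)), ?_⟩
      have hgap : ∀ i j : Fin m, (i:ℕ) < j → (t i + (i:ℕ)) + 2 ≤ (t j + (j:ℕ)) := by
        intro i j hij
        have := hmono (Fin.lt_def.mpr hij)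
        omega
      rw [hf m (fun i => t i + (i:ℕ)) ε hgap hε, hsum]
      apply Finset.sum_congr rfl
      intro i _
      congr 2
      omega
  · -- length preservation
    intro n
    obtain ⟨m, k, ε, hgap, hε, hsum, _⟩ := E2aux n.natAbs n le_rfl
    have hfn : f n = ∑ i, ε i * 3 ^ (k i - (i:ℕ)) := by rw [hsum]; exact hf m k ε hgap hε
    have hmt := shift_strictMono m k hgap
    rw [lg2_eq, lg3_eq, hfn, L3 m _ ε hmt hε, hsum, L2 m k ε hgap hε]
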